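/- In ℂ[y₁, y₂, v], the polynomial r₆(y₁,y₂,v) defined by the recursion r_m(y₁,y₂,v) = -y₁⁻¹y₂ t_{m-1} r_{m-3}(y₂,y₁,v) + (1/2)(-2 + y₂² + y₁⁻¹y₂ t_{m-1}(2v - y₁y₂)) r_{m-2}(y₁,y₂,v) + (1/2)(-2y₁⁻¹y₂ t_{m-1} + y₁y₂ t_{m-1} + 2v - y₁y₂) r_{m-1}(y₂,y₁,v), with r₀ = 0, r₁ = 1, r₂ = v, and t₁=1, t₂=-1, t₃=1, t₄=-1, t₅=1, satisfies r₆(y₁,y₂,v) = (v² - v y₁ y₂ + y₁² + y₂² - 3)(v³ - v² y₁ y₂ + v y₁² + v y₂² - v - y₁ y₂). -/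
import Mathlib


/-- `t₁ = 1, t₂ = -1, t₃ = 1, t₄ = -1, t₅ = 1`, i.e. `t_m = (-1)^(m+1)`. -/
def tSign (m : ℕ) : ℤ := (-1) ^ (m + 1)

/-- The Hilden–Lozano–Montesinos recursion `r_m(y₁, y₂, v)`. -/
def hlmR {K : Type*} [Field K] : ℕ → K → K → K → K
  | 0, _, _, _ => 0
  | 1, _, _, _ => 1
  | 2, _, _, v => v
  | (m + 3), y1, y2, v =>
      -(y1⁻¹ * y2 * (tSign (m + 2) : K)) * hlmR m y2 y1 v
      + (1 / 2) * (-2 + y2 ^ 2 + y1⁻¹ * y2 * (tSign (m + 2) : K) * (2 * v - y1 * y2))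
          * hlmR (m + 1) y1 y2 v
      + (1 / 2) * (-2 * y1⁻¹ * y2 * (tSign (m + 2) : K) + y1 * y2 * (tSign (m + 2) : K)
          + 2 * v - y1 * y2) * hlmR (m + 2) y2 y1 v

section Aux

variable {K : Type*} [Field K] [CharZero K]

lemma tS2 : ((tSign 2 : ℤ) : K) = -1 := by norm_num [tSign]
lemma tS3 : ((tSign 3 : ℤ) : K) = 1 := by norm_num [tSign]
lemma tS4 : ((tSign 4 : ℤ) : K) = -1 := by norm_num [tSign]
lemma tS5 : ((tSign 5 : ℤ) : K) = 1 := by norm_num [tSign]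

lemma hlm3 (a b v : K) (ha : a ≠ 0) :
    hlmR 3 a b v = v ^ 2 + b ^ 2 - v * a * b - 1 := by
  have e : hlmR 3 a b v =
      -(a⁻¹ * b * ((tSign 2 : ℤ) : K)) * hlmR 0 b a v
      + (1 / 2) * (-2 + b ^ 2 + a⁻¹ * b * ((tSign 2 : ℤ) : K) * (2 * v - a * b)) * hlmR 1 a b v
      + (1 / 2) * (-2 * a⁻¹ * b * ((tSign 2 : ℤ) : K) + a * b * ((tSign 2 : ℤ) : K)
          + 2 * v - a * b) * hlmR 2 b a v := rfl
  have b0 : hlmR 0 b a v = (0 : K) := rfl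
  have b1 : hlmR 1 a b v = (1 : K) := rfl
  have b2 : hlmR 2 b a v = v := rfl
  rw [e, b0, b1, b2, tS2]
  have h2 : (2 : K) ≠ 0 := two_ne_zero
  field_simp
  ring

lemma hlm4 (a b v : K) (ha : a ≠ 0) (hb : b ≠ 0) :
    hlmR 4 a b v = v ^ 3 + b ^ 2 * v + a ^ 2 * v - 2 * v - a * b - a * b * v ^ 2 := by
  have e : hlmR 4 a b v =
      -(a⁻¹ * b * ((tSign 3 : ℤ) : K)) * hlmR 1 b a v
      + (1 / 2) * (-2 + b ^ 2 + a⁻¹ * b * ((tSign 3 : ℤ) : K) * (2 * v - a * b)) * hlmR 2 a b v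
      + (1 / 2) * (-2 * a⁻¹ * b * ((tSign 3 : ℤ) : K) + a * b * ((tSign 3 : ℤ) : K)
          + 2 * v - a * b) * hlmR 3 b a v := rfl
  have b1 : hlmR 1 b a v = (1 : K) := rfl
  have b2 : hlmR 2 a b v = v := rfl
  rw [e, b1, b2, hlm3 b a v hb, tS3]
  have h2 : (2 : K) ≠ 0 := two_ne_zero
  field_simp
  ring

lemma hlm5 (a b v : K) (ha : a ≠ 0) (hb : b ≠ 0) :
    hlmR 5 a b v = 1 - 3 * v ^ 2 + v ^ 4 - 3 * b ^ 2 + 2 * b ^ 2 * v ^ 2 + b ^ 4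
      + 3 * a * b * v - 2 * a * b * v ^ 3 - 2 * a * b ^ 3 * v + a ^ 2 * v ^ 2
      + a ^ 2 * b ^ 2 + a ^ 2 * b ^ 2 * v ^ 2 - a ^ 3 * b * v := by
  have e : hlmR 5 a b v =
      -(a⁻¹ * b * ((tSign 4 : ℤ) : K)) * hlmR 2 b a v
      + (1 / 2) * (-2 + b ^ 2 + a⁻¹ * b * ((tSign 4 : ℤ) : K) * (2 * v - a * b)) * hlmR 3 a b v
      + (1 / 2) * (-2 * a⁻¹ * b * ((tSign 4 : ℤ) : K) + a * b * ((tSign 4 : ℤ) : K)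
          + 2 * v - a * b) * hlmR 4 b a v := rfl
  have b2 : hlmR 2 b a v = v := rfl
  rw [e, b2, hlm3 a b v ha, hlm4 b a v hb ha, tS4]
  have h2 : (2 : K) ≠ 0 := two_ne_zero
  field_simp
  ring

lemma hlm6 (y1 y2 v : K) (h1 : y1 ≠ 0) (h2 : y2 ≠ 0) :
    hlmR 6 y1 y2 v =
      (v ^ 2 - v * y1 * y2 + y1 ^ 2 + y2 ^ 2 - 3)
        * (v ^ 3 - v ^ 2 * y1 * y2 + v * y1 ^ 2 + v * y2 ^ 2 - v - y1 * y2) := by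
  have e : hlmR 6 y1 y2 v =
      -(y1⁻¹ * y2 * ((tSign 5 : ℤ) : K)) * hlmR 3 y2 y1 v
      + (1 / 2) * (-2 + y2 ^ 2 + y1⁻¹ * y2 * ((tSign 5 : ℤ) : K) * (2 * v - y1 * y2))
          * hlmR 4 y1 y2 v
      + (1 / 2) * (-2 * y1⁻¹ * y2 * ((tSign 5 : ℤ) : K) + y1 * y2 * ((tSign 5 : ℤ) : K)
          + 2 * v - y1 * y2) * hlmR 5 y2 y1 v := rfl
  rw [e, hlm3 y2 y1 v h2, hlm4 y1 y2 v h1 h2, hlm5 y2 y1 v h2 h1, tS5]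
  have h3 : (2 : K) ≠ 0 := two_ne_zero
  field_simp
  ring

end Aux

/-- In the rational function field `ℂ(y₁, y₂, v)` (the fraction field of
`ℂ[y₁, y₂, v]`), the element `r₆(y₁, y₂, v)` equals the stated polynomial. -/
theorem stmt_4 :
    ∀ (y1 y2 v : FractionRing (MvPolynomial (Fin 3) ℂ)),
      y1 = algebraMap (MvPolynomial (Fin 3) ℂ) _ (MvPolynomial.X 0) →
      y2 = algebraMap (MvPolynomial (Fin 3) ℂ) _ (MvPolynomial.X 1) →
      v = algebraMap (MvPolynomial (Fin 3) ℂ) _ (MvPolynomial.X 2) →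
      hlmR 6 y1 y2 v =
        (v ^ 2 - v * y1 * y2 + y1 ^ 2 + y2 ^ 2 - 3)
          * (v ^ 3 - v ^ 2 * y1 * y2 + v * y1 ^ 2 + v * y2 ^ 2 - v - y1 * y2) := by
  intro y1 y2 v h1 h2 _
  have inj := IsFractionRing.injective (MvPolynomial (Fin 3) ℂ)
    (FractionRing (MvPolynomial (Fin 3) ℂ))
  apply hlm6
  · rw [h1]
    simp only [ne_eq, map_eq_zero_iff _ inj]
    exact MvPolynomial.X_ne_zero 0
  · rw [h2]
    simp only [ne_eq, map_eq_zero_iff _ inj]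
    exact MvPolynomial.X_ne_zero 1
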